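/- The evolution algebra A over ℤ/4ℤ with basis (x_i)_{i≥1} and relations x_i·x_i = 2x_i + x_{i+1}, x_i·x_j = 0 for i ≠ j, is nil but not nilpotent, is generated (as a non-unital, non-associative algebra) by the single element x_1, and its multiplication is not associative. (Theorem 3.1) -/

import Mathlib

/-!
The evolution algebra `A` over `R = ℤ/4ℤ` with basis `(x_i)_{i ≥ 1}` indexed by
`ℕ+` (underlying module `ℕ+ →₀ ZMod 4`, `x_i = Finsupp.single i 1`) and
relations `x_i · x_i = 2x_i + x_{i+1}`, `x_i · x_j = 0` for `i ≠ j`;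
concretely `(a · b) = ∑_i a(i) * b(i) • (2 • x_i + x_{i+1})`.
-/
noncomputable def evolMul {R : Type*} [CommRing R] {ι : Type*}
    (Csq : ι → ι →₀ R) (a b : ι →₀ R) : ι →₀ R :=
  a.sum fun i ai => (ai * b i) • Csq i

/-- The squares of the basis elements: `x_i · x_i = 2 • x_i + x_{i+1}`. -/
noncomputable def sqZ4 : ℕ+ → (ℕ+ →₀ ZMod 4) := fun i =>
  (2 : ZMod 4) • Finsupp.single i 1 + Finsupp.single (i + 1) 1

/-- Principal powers: `ppow mul a n = aⁿ` for `n ≥ 1`, defined by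
`a^1 = a` and `a^{n+1} = a^n · a`. -/
def ppow {A : Type*} (mul : A → A → A) (a : A) : ℕ → A
  | 0 => a
  | 1 => a
  | n + 2 => mul (ppow mul a (n + 1)) a

/-- Left-normed products: `lnp mul f m = ((f 0 · f 1) · f 2) ⋯ · f m`
is the left-normed product of the `m + 1` elements `f 0, …, f m`. -/
def lnp {A : Type*} (mul : A → A → A) (f : ℕ → A) : ℕ → A
  | 0 => f 0
  | m + 1 => mul (lnp mul f m) (f (m + 1))

-- PNat helpers
lemma pnat_succ_ne_one (i : ℕ+) : i + 1 ≠ 1 := by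
  intro h
  have h2 : (i : ℕ) + 1 = 1 := by exact_mod_cast congrArg (fun x : ℕ+ => (x : ℕ)) h
  have := i.pos
  omega

lemma pnat_succ_inj {i j : ℕ+} : i + 1 = j + 1 ↔ i = j := by
  constructor
  · intro h
    have h2 : (i : ℕ) + 1 = (j : ℕ) + 1 := by
      exact_mod_cast congrArg (fun x : ℕ+ => (x : ℕ)) h
    exact PNat.coe_injective (by omega)
  · rintro rfl; rfl

lemma pnat_exists_succ (k : ℕ+) (h : k ≠ 1) : ∃ j : ℕ+, k = j + 1 := by
  have hk := k.pos
  have h1 : (k : ℕ) ≠ 1 := fun hc => h (PNat.coe_injective (by simpa using hc))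
  refine ⟨⟨(k : ℕ) - 1, by omega⟩, PNat.coe_injective ?_⟩
  show (k : ℕ) = ((k : ℕ) - 1) + 1
  omega

lemma sqZ4_apply (i k : ℕ+) :
    sqZ4 i k = 2 * (if i = k then 1 else 0) + (if i + 1 = k then 1 else 0) := by
  simp [sqZ4, Finsupp.single_apply, smul_eq_mul]

lemma evolMul_apply_one (a b : ℕ+ →₀ ZMod 4) :
    evolMul sqZ4 a b 1 = 2 * (a 1 * b 1) := by
  classical
  rw [evolMul, Finsupp.sum_apply]
  have : (a.sum fun i ai => ((ai * b i) • sqZ4 i) 1)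
      = a.sum fun i ai => (if i = 1 then 2 * (ai * b i) else 0) := by
    apply Finsupp.sum_congr
    intro i _
    rw [Finsupp.smul_apply, smul_eq_mul, sqZ4_apply]
    rw [if_neg (pnat_succ_ne_one i)]
    split_ifs <;> ring
  rw [this, Finsupp.sum_ite_eq']
  split_ifs with h
  · rfl
  · rw [Finsupp.notMem_support_iff.mp h]; ring

lemma evolMul_apply_succ (a b : ℕ+ →₀ ZMod 4) (j : ℕ+) :
    evolMul sqZ4 a b (j + 1) = 2 * (a (j+1) * b (j+1)) + a j * b j := by
  classical
  rw [evolMul, Finsupp.sum_apply]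
  have : (a.sum fun i ai => ((ai * b i) • sqZ4 i) (j+1))
      = a.sum fun i ai =>
          ((if i = j + 1 then 2 * (ai * b i) else 0) + (if i = j then ai * b i else 0)) := by
    apply Finsupp.sum_congr
    intro i _
    rw [Finsupp.smul_apply, smul_eq_mul, sqZ4_apply]
    simp only [pnat_succ_inj]
    split_ifs <;> ring
  rw [this, Finsupp.sum_add, Finsupp.sum_ite_eq', Finsupp.sum_ite_eq']
  congr 1
  · split_ifs with h
    · rfl
    · rw [Finsupp.notMem_support_iff.mp h]; ring
  · split_ifs with h
    · rfl
    · rw [Finsupp.notMem_support_iff.mp h]; ring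

lemma evolMul_single (c : ℕ+ →₀ ZMod 4) (j : ℕ+) :
    evolMul sqZ4 c (Finsupp.single j 1) = c j • sqZ4 j := by
  classical
  rw [evolMul]
  have : (c.sum fun i ci => (ci * (Finsupp.single j 1) i) • sqZ4 i)
      = c.sum fun i ci => (if i = j then ci • sqZ4 i else 0) := by
    apply Finsupp.sum_congr
    intro i _
    rw [Finsupp.single_apply]
    split_ifs with h1 h2 h2
    · subst h2; simp
    · exact absurd h1.symm h2
    · exact absurd h2.symm h1
    · simp
  rw [this, Finsupp.sum_ite_eq']
  split_ifs with h
  · rfl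
  · rw [Finsupp.notMem_support_iff.mp h, zero_smul]

lemma evolMul_zero_right (a : ℕ+ →₀ ZMod 4) : evolMul sqZ4 a 0 = 0 := by
  simp [evolMul]

lemma sqZ4_ne_zero (i : ℕ+) : sqZ4 i ≠ 0 := by
  intro h
  have h1 : sqZ4 i (i + 1) = 0 := by rw [h]; rfl
  rw [sqZ4_apply] at h1
  have hne : i ≠ i + 1 := by
    intro hc
    have : (i : ℕ) = (i : ℕ) + 1 := by exact_mod_cast congrArg (fun x : ℕ+ => (x : ℕ)) hc
    omega
  rw [if_neg hne, if_pos rfl] at h1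
  exact absurd h1 (by decide)

lemma ppow_succ {A : Type*} (mul : A → A → A) (a : A) {s : ℕ} (h : 1 ≤ s) :
    ppow mul a (s + 1) = mul (ppow mul a s) a := by
  match s, h with
  | (t+1), _ => rfl

lemma ppow_supp (a : ℕ+ →₀ ZMod 4) (N : ℕ+) (hN : ∀ i, N < i → a i = 0) :
    ∀ n, ∀ k : ℕ+, N + 1 < k → ppow (evolMul sqZ4) a n k = 0 := by
  intro n k hk
  have hkc : (N:ℕ) + 1 < (k:ℕ) := by exact_mod_cast hk
  have hkN : N < k := by rw [← PNat.coe_lt_coe]; omega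
  match n with
  | 0 => exact hN k hkN
  | 1 => exact hN k hkN
  | (m+2) =>
    show evolMul sqZ4 (ppow (evolMul sqZ4) a (m+1)) a k = 0
    have hk1 : k ≠ 1 := by
      intro hc; subst hc
      have : (N:ℕ) + 1 < 1 := by exact_mod_cast hk
      omega
    obtain ⟨j, rfl⟩ := pnat_exists_succ k hk1
    rw [evolMul_apply_succ]
    have hj : N < j := by
      have h1 : (N:ℕ) + 1 < (j:ℕ) + 1 := by exact_mod_cast hk
      have : (N:ℕ) < (j:ℕ) := by omega
      exact_mod_cast this
    rw [hN j hj, hN (j+1) hkN, mul_zero, mul_zero, mul_zero, add_zero]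

lemma two_two_mul (z : ZMod 4) : 2 * (2 * z) = 0 := by
  rw [← mul_assoc]
  have h4 : (2 : ZMod 4) * 2 = 0 := by decide
  rw [h4, zero_mul]

lemma two_mul_shift (x y : ZMod 4) (h : 2 * x = 0) : 2 * (x * y) = 0 := by
  rw [← mul_assoc, h, zero_mul]

lemma ppow_even (a : ℕ+ →₀ ZMod 4) :
    ∀ n : ℕ, ∀ k : ℕ+, (k : ℕ) ≤ n → 2 * (ppow (evolMul sqZ4) a (n + 1) k) = 0 := by
  intro n
  induction n with
  | zero => intro k hk; have := k.pos; omega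
  | succ n ih =>
    intro k hk
    have hstep : ppow (evolMul sqZ4) a (n + 2) = evolMul sqZ4 (ppow (evolMul sqZ4) a (n+1)) a := rfl
    rw [hstep]
    by_cases hk1 : k = 1
    · subst hk1
      rw [evolMul_apply_one]
      exact two_two_mul _
    · obtain ⟨j, rfl⟩ := pnat_exists_succ k hk1
      rw [evolMul_apply_succ, mul_add, two_two_mul, zero_add]
      have hj : (j : ℕ) ≤ n := by
        have : (j:ℕ) + 1 ≤ n + 1 := by exact_mod_cast hk
        omega
      exact two_mul_shift _ _ (ih j hj)

lemma ppow_nil (a : ℕ+ →₀ ZMod 4) (N : ℕ+) (hN : ∀ i, N < i → a i = 0) :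
    ppow (evolMul sqZ4) a (((N:ℕ) + 2) + ((N:ℕ) + 2)) = 0 := by
  set m := (N:ℕ) + 2 with hm
  -- all coefficients of a^m are even
  have heven0 : ∀ k : ℕ+, 2 * (ppow (evolMul sqZ4) a m k) = 0 := by
    intro k
    by_cases hk : (k:ℕ) ≤ (N:ℕ) + 1
    · exact ppow_even a ((N:ℕ)+1) k hk
    · have hk' : N + 1 < k := by
        rw [← PNat.coe_lt_coe, PNat.add_coe, PNat.one_coe]
        omega
      rw [ppow_supp a N hN m k hk', mul_zero]
  -- induction: a^(m+t) is all-even and vanishes at indices ≤ t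
  have main : ∀ t : ℕ,
      (∀ k : ℕ+, 2 * (ppow (evolMul sqZ4) a (m + t) k) = 0) ∧
      (∀ k : ℕ+, (k:ℕ) ≤ t → ppow (evolMul sqZ4) a (m + t) k = 0) := by
    intro t
    induction t with
    | zero => exact ⟨by simpa using heven0, fun k hk => by have := k.pos; omega⟩
    | succ t ih =>
      obtain ⟨ihe, ihv⟩ := ih
      have hstep : ppow (evolMul sqZ4) a (m + (t+1)) =
          evolMul sqZ4 (ppow (evolMul sqZ4) a (m + t)) a := by
        have h1 : m + (t + 1) = (m + t) + 1 := by omega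
        rw [h1, ppow_succ _ _ (by omega)]
      constructor
      · intro k
        rw [hstep]
        by_cases hk1 : k = 1
        · subst hk1; rw [evolMul_apply_one]; exact two_two_mul _
        · obtain ⟨j, rfl⟩ := pnat_exists_succ k hk1
          rw [evolMul_apply_succ, mul_add, two_two_mul, zero_add]
          exact two_mul_shift _ _ (ihe j)
      · intro k hk
        rw [hstep]
        by_cases hk1 : k = 1
        · subst hk1
          rw [evolMul_apply_one, ← mul_assoc, ihe 1, zero_mul]
        · obtain ⟨j, rfl⟩ := pnat_exists_succ k hk1
          rw [evolMul_apply_succ]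
          have hj : (j:ℕ) ≤ t := by
            have : (j:ℕ) + 1 ≤ t + 1 := by exact_mod_cast hk
            omega
          rw [ihv j hj, zero_mul, add_zero, ← mul_assoc, ihe (j+1), zero_mul]
  ext k
  rw [Finsupp.zero_apply]
  by_cases hk : (k:ℕ) ≤ m
  · exact (main m).2 k hk
  · have hk' : N + 1 < k := by
      rw [← PNat.coe_lt_coe, PNat.add_coe, PNat.one_coe]
      omega
    exact ppow_supp a N hN _ k hk'

noncomputable def fseq : ℕ → (ℕ+ →₀ ZMod 4) := fun m => Finsupp.single (Nat.toPNat' m) 1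

lemma toPNat'_succ_succ (m : ℕ) : Nat.toPNat' (m + 2) = Nat.toPNat' (m + 1) + 1 := rfl

lemma sqZ4_self_succ (i : ℕ+) : sqZ4 i (i + 1) = 1 := by
  rw [sqZ4_apply]
  have hne : i ≠ i + 1 := by
    intro hc
    have : (i : ℕ) = (i : ℕ) + 1 := by exact_mod_cast congrArg (fun x : ℕ+ => (x : ℕ)) hc
    omega
  rw [if_neg hne, if_pos rfl]
  ring

lemma lnp_fseq : ∀ m : ℕ, lnp (evolMul sqZ4) fseq (m + 1) = sqZ4 (Nat.toPNat' (m + 1)) := by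
  intro m
  induction m with
  | zero =>
    show evolMul sqZ4 (fseq 0) (fseq 1) = sqZ4 1
    show evolMul sqZ4 (Finsupp.single 1 1) (Finsupp.single 1 1) = sqZ4 1
    rw [evolMul_single, Finsupp.single_eq_same, one_smul]
  | succ m ih =>
    show evolMul sqZ4 (lnp (evolMul sqZ4) fseq (m+1)) (fseq (m + 2)) = sqZ4 (Nat.toPNat' (m + 2))
    rw [ih, toPNat'_succ_succ]
    show evolMul sqZ4 (sqZ4 (Nat.toPNat' (m+1)))
        (Finsupp.single (Nat.toPNat' (m+1) + 1) 1) = _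
    rw [evolMul_single, sqZ4_self_succ, one_smul]

lemma gen_by_x1 (p : Submodule (ZMod 4) (ℕ+ →₀ ZMod 4))
    (h1 : Finsupp.single 1 1 ∈ p)
    (hmul : ∀ a b : ℕ+ →₀ ZMod 4, a ∈ p → b ∈ p → evolMul sqZ4 a b ∈ p) :
    ∀ z : ℕ+ →₀ ZMod 4, z ∈ p := by
  have key : ∀ i : ℕ+, Finsupp.single i 1 ∈ p := by
    have aux : ∀ n : ℕ, Finsupp.single (Nat.succPNat n) 1 ∈ p := by
      intro n
      induction n with
      | zero => exact h1
      | succ n ih =>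
        have hsq : evolMul sqZ4 (Finsupp.single n.succPNat 1)
            (Finsupp.single n.succPNat 1) = sqZ4 n.succPNat := by
          rw [evolMul_single, Finsupp.single_eq_same, one_smul]
        have hmem : sqZ4 n.succPNat ∈ p := hsq ▸ hmul _ _ ih ih
        have heq : Finsupp.single (n.succPNat + 1) 1
            = sqZ4 n.succPNat - (2 : ZMod 4) • Finsupp.single n.succPNat 1 := by
          rw [sqZ4]; abel
        have hii : Nat.succPNat (n + 1) = n.succPNat + 1 := by
          apply PNat.coe_injective
          rw [PNat.add_coe, PNat.one_coe, Nat.succPNat_coe, Nat.succPNat_coe]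
        rw [hii, heq]
        exact Submodule.sub_mem p hmem (Submodule.smul_mem p _ ih)
    intro i
    have : i = Nat.succPNat ((i : ℕ) - 1) := by
      apply PNat.coe_injective
      rw [Nat.succPNat_coe]
      have := i.pos
      omega
    rw [this]
    exact aux _
  intro z
  rw [← Finsupp.sum_single z]
  apply Submodule.finsuppSum_mem
  intro i _
  have : Finsupp.single i (z i) = (z i) • Finsupp.single i 1 := by
    rw [Finsupp.smul_single, smul_eq_mul, mul_one]
  rw [this]
  exact Submodule.smul_mem p _ (key i)

lemma not_assoc :
    ¬ (∀ a b c : ℕ+ →₀ ZMod 4,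
        evolMul sqZ4 (evolMul sqZ4 a b) c = evolMul sqZ4 a (evolMul sqZ4 b c)) := by
  intro h
  have h1 := h (Finsupp.single 1 1) (Finsupp.single 1 1) (Finsupp.single (1 + 1) 1)
  have hx : evolMul sqZ4 (Finsupp.single 1 1) (Finsupp.single 1 1) = sqZ4 1 := by
    rw [evolMul_single, Finsupp.single_eq_same, one_smul]
  have hy : evolMul sqZ4 (Finsupp.single 1 1) (Finsupp.single (1+1) 1) = 0 := by
    rw [evolMul_single]
    have : (Finsupp.single (1:ℕ+) 1) (1 + 1) = (0 : ZMod 4) := by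
      rw [Finsupp.single_apply, if_neg]
      intro hc
      exact pnat_succ_ne_one 1 hc.symm
    rw [this, zero_smul]
  rw [hx, hy, evolMul_zero_right, evolMul_single, sqZ4_self_succ, one_smul] at h1
  exact sqZ4_ne_zero _ h1

/-- Theorem 3.1: The evolution algebra over `ℤ/4ℤ` with
`x_i·x_i = 2x_i + x_{i+1}` is nil but not nilpotent, is generated (as a
non-unital, non-associative algebra, i.e. the smallest mul-closed submodule)
by the single element `x_1`, and its multiplication is not associative. -/
theorem example_Z4_nil_not_nilpotent_generated_by_x1 :
    (∀ a : ℕ+ →₀ ZMod 4, ∃ n : ℕ, 1 ≤ n ∧ ppow (evolMul sqZ4) a n = 0) ∧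
    ¬ (∃ n : ℕ, 2 ≤ n ∧
        ∀ f : ℕ → (ℕ+ →₀ ZMod 4), lnp (evolMul sqZ4) f (n - 1) = 0) ∧
    (∀ p : Submodule (ZMod 4) (ℕ+ →₀ ZMod 4),
        Finsupp.single 1 1 ∈ p →
        (∀ a b : ℕ+ →₀ ZMod 4, a ∈ p → b ∈ p → evolMul sqZ4 a b ∈ p) →
        ∀ z : ℕ+ →₀ ZMod 4, z ∈ p) ∧
    ¬ (∀ a b c : ℕ+ →₀ ZMod 4,
        evolMul sqZ4 (evolMul sqZ4 a b) c = evolMul sqZ4 a (evolMul sqZ4 b c)) := by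
  refine ⟨?_, ?_, gen_by_x1, not_assoc⟩
  · intro a
    classical
    set Nn : ℕ := a.support.sup (fun i => (i : ℕ)) with hNn
    set N : ℕ+ := ⟨Nn + 1, Nat.succ_pos _⟩ with hNdef
    have hN : ∀ i : ℕ+, N < i → a i = 0 := by
      intro i hi
      by_contra hne
      have hmem : i ∈ a.support := Finsupp.mem_support_iff.mpr hne
      have hle : (i : ℕ) ≤ Nn := Finset.le_sup (f := fun i : ℕ+ => (i : ℕ)) hmem
      have : (N : ℕ) < (i : ℕ) := by exact_mod_cast hi
      have hNc : (N : ℕ) = Nn + 1 := rfl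
      omega
    exact ⟨((N:ℕ) + 2) + ((N:ℕ) + 2), by omega, ppow_nil a N hN⟩
  · rintro ⟨n, hn, hall⟩
    have h := hall fseq
    obtain ⟨m, hm⟩ : ∃ m, n - 1 = m + 1 := ⟨n - 2, by omega⟩
    rw [hm, lnp_fseq] at h
    exact sqZ4_ne_zero _ h
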